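/- With the operators e_i^∞ on F_n, the two-parameter Serre relation holds: for every i ∈ ℤ, (e_i^∞)^2 e_{i+1}^∞ − (r+s) e_i^∞ e_{i+1}^∞ e_i^∞ + rs · e_{i+1}^∞ (e_i^∞)^2 = 0 as operators on F_n. Moreover, since (e_i^∞)^2 = 0 and e_i^∞ e_{i+1}^∞ e_i^∞ = 0 on F_n, each of the three summands vanishes individually. -/

import Mathlib

noncomputable section
open scoped Classical

abbrev K : Type := FractionRing (MvPolynomial (Fin 2) ℚ)

def rr : K := algebraMap (MvPolynomial (Fin 2) ℚ) K (MvPolynomial.X 0)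
def ss : K := algebraMap (MvPolynomial (Fin 2) ℚ) K (MvPolynomial.X 1)

/-- An extended Young diagram of charge `n`: a weakly increasing integer sequence
eventually equal to `n`. -/
structure EYD (n : ℤ) where
  y : ℕ → ℤ
  mono : ∀ k, y k ≤ y (k + 1)
  charge : ∃ N, ∀ k, N ≤ k → y k = n

namespace EYD

variable {n : ℤ}

/-- `Y` has a convex corner on diagonal `i` at column `k`. -/
def ConvexAt (Y : EYD n) (i : ℤ) (k : ℕ) : Prop :=
  Y.y k < Y.y (k + 1) ∧ Y.y k + k + 1 = i

/-- `Y` has a concave corner on diagonal `i` at column `k`. -/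
def ConcaveAt (Y : EYD n) (i : ℤ) (k : ℕ) : Prop :=
  (k = 0 ∨ ∃ j, k = j + 1 ∧ Y.y j < Y.y k) ∧ Y.y k + k = i

/-- Replace the convex corner at column `k` by a concave one. -/
def up (Y : EYD n) (k : ℕ) (h : Y.y k < Y.y (k + 1)) : EYD n where
  y := Function.update Y.y k (Y.y k + 1)
  mono := by
    intro m
    rcases eq_or_ne m k with rfl | h1
    · rw [Function.update_self, Function.update_of_ne (show m + 1 ≠ m by omega)]
      omega
    · rcases eq_or_ne (m + 1) k with h2 | h2
      · have hm := Y.mono m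
        rw [Function.update_of_ne h1, h2, Function.update_self, ← h2]
        omega
      · rw [Function.update_of_ne h1, Function.update_of_ne h2]
        exact Y.mono m
  charge := by
    obtain ⟨N, hN⟩ := Y.charge
    exact ⟨max N (k + 1), fun m hm => by
      rw [Function.update_of_ne (show m ≠ k by omega)]
      exact hN m (by omega)⟩

/-- Replace the concave corner at column `k` by a convex one. -/
def down (Y : EYD n) (k : ℕ) (h : k = 0 ∨ ∃ j, k = j + 1 ∧ Y.y j < Y.y k) : EYD n where
  y := Function.update Y.y k (Y.y k - 1)
  mono := by
    intro m
    rcases eq_or_ne m k with rfl | h1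
    · rw [Function.update_self, Function.update_of_ne (show m + 1 ≠ m by omega)]
      have := Y.mono m
      omega
    · rcases eq_or_ne (m + 1) k with h2 | h2
      · rw [Function.update_of_ne h1, h2, Function.update_self]
        rcases h with h | ⟨j, hj, hjy⟩
        · omega
        · have : j = m := by omega
          subst this
          omega
      · rw [Function.update_of_ne h1, Function.update_of_ne h2]
        exact Y.mono m
  charge := by
    obtain ⟨N, hN⟩ := Y.charge
    exact ⟨max N (k + 1), fun m hm => by
      rw [Function.update_of_ne (show m ≠ k by omega)]
      exact hN m (by omega)⟩

/-- The action of `e_i^∞` on a diagram: turn the convex corner on diagonal `i`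
into a concave one, if any. -/
def eAct (i : ℤ) (Y : EYD n) : Option (EYD n) :=
  if h : ∃ k, Y.ConvexAt i k then some (Y.up h.choose h.choose_spec.1) else none

/-- The action of `f_i^∞` on a diagram: turn the concave corner on diagonal `i`
into a convex one, if any. -/
def fAct (i : ℤ) (Y : EYD n) : Option (EYD n) :=
  if h : ∃ k, Y.ConcaveAt i k then some (Y.down h.choose h.choose_spec.1) else none

end EYD

/-- The Fock space of charge `n`. -/
abbrev Fock (n : ℤ) : Type := EYD n →₀ K

def ovec {n : ℤ} (o : Option (EYD n)) : Fock n :=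
  o.elim 0 fun Y => Finsupp.single Y 1

/-- The linear operator on Fock space induced by a partially defined map on diagrams. -/
def opOf {n : ℤ} (a : EYD n → Option (EYD n)) : Fock n →ₗ[K] Fock n :=
  Finsupp.lsum K fun Y => LinearMap.smulRight (LinearMap.id : K →ₗ[K] K) (ovec (a Y))

/-- A diagonal operator on Fock space. -/
def diagOp {n : ℤ} (c : EYD n → K) : Fock n →ₗ[K] Fock n :=
  Finsupp.lsum K fun Y => LinearMap.smulRight (LinearMap.id : K →ₗ[K] K) (c Y • Finsupp.single Y 1)

def Eop (n i : ℤ) : Fock n →ₗ[K] Fock n := opOf (EYD.eAct i)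
def Fop (n i : ℤ) : Fock n →ₗ[K] Fock n := opOf (EYD.fAct i)

namespace EYD

variable {n : ℤ}

lemma up_y (Y : EYD n) (k : ℕ) (h : Y.y k < Y.y (k + 1)) (m : ℕ) :
    (Y.up k h).y m = if m = k then Y.y k + 1 else Y.y m := by
  simp [up, Function.update_apply]

lemma dmono (Y : EYD n) {a b : ℕ} (hab : a < b) : Y.y a + a < Y.y b + b := by
  have : StrictMono (fun m => Y.y m + (m : ℤ)) :=
    strictMono_nat_of_lt_succ fun m => by have := Y.mono m; push_cast; omega
  exact this hab

lemma dmono' (Y : EYD n) {a b : ℕ} (hab : a ≤ b) : Y.y a + a ≤ Y.y b + b := by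
  rcases eq_or_lt_of_le hab with rfl | h
  · exact le_refl _
  · exact le_of_lt (Y.dmono h)

lemma no_convex_up {Y : EYD n} {i : ℤ} {k : ℕ} (hc : Y.ConvexAt i k) (m : ℕ) :
    ¬ (Y.up k hc.1).ConvexAt i m := by
  rintro ⟨-, h2⟩
  rw [up_y] at h2
  have hk := hc.2
  rcases lt_trichotomy m k with hmk | rfl | hmk
  · have := Y.dmono hmk
    rw [if_neg (by omega)] at h2
    omega
  · rw [if_pos rfl] at h2; omega
  · rw [if_neg (by omega)] at h2
    have h3 := Y.dmono' (show k + 1 ≤ m by omega)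
    have := hc.1
    push_cast at h3
    omega

lemma bind_sq (i : ℤ) (Y : EYD n) : (eAct i Y).bind (eAct i) = none := by
  rw [eAct]
  split
  · rename_i h
    simp only [Option.bind_some]
    rw [eAct, dif_neg]
    rintro ⟨m, hm⟩
    exact no_convex_up h.choose_spec m hm
  · rfl

lemma bind_triple (i : ℤ) (Y : EYD n) :
    ((eAct i Y).bind (eAct (i + 1))).bind (eAct i) = none := by
  rw [eAct]
  split
  · rename_i h
    simp only [Option.bind_some]
    set k := h.choose with hkdef
    have hc : Y.ConvexAt i k := h.choose_spec
    set Y1 := Y.up k hc.1 with hY1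
    rw [eAct]
    split
    · rename_i h'
      simp only [Option.bind_some]
      set k' := h'.choose with hk'def
      have hc' : Y1.ConvexAt (i + 1) k' := h'.choose_spec
      have hk'k : k' = k := by
        by_contra hne
        have h2 := hc'.2
        have h1 := hc.2
        rw [hY1, up_y, if_neg hne] at h2
        rcases lt_trichotomy k' k with hlt | heq | hgt
        · have := Y.dmono hlt; omega
        · exact hne heq
        · have h3 := Y.dmono' (show k + 1 ≤ k' by omega)
          have := hc.1
          push_cast at h3
          omega
      rw [eAct, dif_neg]
      rintro ⟨m, -, hm2⟩
      have hup : ∀ j, (Y1.up k' hc'.1).y j =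
          if j = k then Y.y k + 2 else Y.y j := by
        intro j
        rw [up_y, hY1, up_y, up_y, hk'k]
        rcases eq_or_ne j k with rfl | hj
        · simp; ring
        · simp [hj]
      rw [hup] at hm2
      have hk := hc.2
      rcases lt_trichotomy m k with hmk | rfl | hmk
      · have := Y.dmono hmk
        rw [if_neg (by omega)] at hm2
        omega
      · rw [if_pos rfl] at hm2; omega
      · rw [if_neg (by omega)] at hm2
        have h3 := Y.dmono' (show k + 1 ≤ m by omega)
        have := hc.1
        push_cast at h3
        omega
    · rfl
  · rfl

end EYD

lemma opOf_single {n : ℤ} (a : EYD n → Option (EYD n)) (Y : EYD n) (b : K) :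
    opOf a (Finsupp.single Y b) = b • ovec (a Y) := by
  simp [opOf]

lemma opOf_ovec {n : ℤ} (a : EYD n → Option (EYD n)) (o : Option (EYD n)) :
    opOf a (ovec o) = ovec (o.bind a) := by
  cases o with
  | none => simp [ovec]
  | some Y => simp [ovec, opOf_single]

lemma opOf_comp3_eq_zero {n : ℤ} (a b c : EYD n → Option (EYD n))
    (h : ∀ Y, ((c Y).bind b).bind a = none) :
    opOf a ∘ₗ opOf b ∘ₗ opOf c = 0 := by
  apply Finsupp.lhom_ext
  intro Y x
  simp only [LinearMap.comp_apply, opOf_single, map_smul, opOf_ovec, h Y,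
    LinearMap.zero_apply]
  simp [ovec]

/-- The two-parameter Serre relation
`(e_i^∞)² e_{i+1}^∞ − (r+s) e_i^∞ e_{i+1}^∞ e_i^∞ + rs · e_{i+1}^∞ (e_i^∞)² = 0`
holds as operators on `F_n`; moreover each of the three summands vanishes
individually, since `(e_i^∞)² = 0` and `e_i^∞ e_{i+1}^∞ e_i^∞ = 0` on `F_n`. -/
theorem stmt_14 (n i : ℤ) :
    (Eop n i ∘ₗ Eop n i ∘ₗ Eop n (i + 1))
        - (rr + ss) • (Eop n i ∘ₗ Eop n (i + 1) ∘ₗ Eop n i)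
        + (rr * ss) • (Eop n (i + 1) ∘ₗ Eop n i ∘ₗ Eop n i) = 0 ∧
    Eop n i ∘ₗ Eop n i ∘ₗ Eop n (i + 1) = 0 ∧
    Eop n i ∘ₗ Eop n (i + 1) ∘ₗ Eop n i = 0 ∧
    Eop n (i + 1) ∘ₗ Eop n i ∘ₗ Eop n i = 0 := by
  have h1 : Eop n i ∘ₗ Eop n i ∘ₗ Eop n (i + 1) = 0 := by
    apply opOf_comp3_eq_zero
    intro Y
    cases h : EYD.eAct (i + 1) Y with
    | none => rfl
    | some Y1 => simp only [Option.bind_some]; exact EYD.bind_sq i Y1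
  have h2 : Eop n i ∘ₗ Eop n (i + 1) ∘ₗ Eop n i = 0 := by
    apply opOf_comp3_eq_zero
    intro Y
    exact EYD.bind_triple i Y
  have h3 : Eop n (i + 1) ∘ₗ Eop n i ∘ₗ Eop n i = 0 := by
    apply opOf_comp3_eq_zero
    intro Y
    rw [EYD.bind_sq i Y]
    rfl
  refine ⟨?_, h1, h2, h3⟩
  rw [h1, h2, h3]
  rw [smul_zero, smul_zero]
  show (0 : Fock n →ₗ[K] Fock n) - 0 + 0 = 0
  refine LinearMap.ext fun x => ?_
  simp only [LinearMap.add_apply, LinearMap.sub_apply, LinearMap.zero_apply, sub_self, add_zero]
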